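/- Let d ≥ 1 and let B, C ∈ M_d(ℂ) satisfy BᴴB + CᴴC = 1. Consider the nearest-neighbour OQRW on ℤ acting on families ρ = (ρ_i)_{i∈ℤ} of positive semidefinite matrices by M(ρ)_i = B ρ_{i+1} Bᴴ + C ρ_{i-1} Cᴴ. Assume that for every positive semidefinite x ∈ M_d(ℂ), Bᴴ x B = 0 and Cᴴ x C = 0 together imply x = 0. Then whenever every ρ_i is positive definite, every block M(ρ)_i is positive definite. (Paper's Proposition 5.3: under condition (5.2), 𝓜(ρ) is faithful whenever ρ is faithful, so the QMC associated with a faithful initial state is irreducible.) -/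

import Mathlib

open Matrix
open scoped ComplexOrder

lemma vecMulVec_star_posSemidef {d : ℕ} (v : Fin d → ℂ) :
    (vecMulVec v (star v)).PosSemidef := by
  rw [posSemidef_iff_dotProduct_mulVec]
  constructor
  · ext i j
    simp [vecMulVec_apply, conjTranspose_apply, mul_comm]
  · intro x
    have h1 : (vecMulVec v (star v)) *ᵥ x = (star v ⬝ᵥ x) • v := by
      ext i
      simp only [vecMulVec_apply, mulVec, dotProduct, Pi.smul_apply, smul_eq_mul,
        Finset.sum_mul, Pi.star_apply]
      exact Finset.sum_congr rfl fun j _ => by ring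
    have h2 : star x ⬝ᵥ v = star (star v ⬝ᵥ x) := by
      rw [star_dotProduct]
    rw [h1, dotProduct_smul, h2, smul_eq_mul]
    exact mul_star_self_nonneg _

lemma sandwich_zero {d : ℕ} (v : Fin d → ℂ) (B : Matrix (Fin d) (Fin d) ℂ)
    (hb : Bᴴ *ᵥ v = 0) : Bᴴ * vecMulVec v (star v) * B = 0 := by
  rw [vecMulVec_eq (Fin 1) v (star v), ← Matrix.mul_assoc, ← replicateCol_mulVec, hb]
  simp

lemma quad_form_eq {d : ℕ} (A B : Matrix (Fin d) (Fin d) ℂ) (v : Fin d → ℂ) :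
    star v ⬝ᵥ (B * A * Bᴴ) *ᵥ v = star (Bᴴ *ᵥ v) ⬝ᵥ A *ᵥ (Bᴴ *ᵥ v) := by
  simp [mulVec_mulVec, dotProduct_mulVec, star_mulVec, vecMul_vecMul, Matrix.mul_assoc]

/-- Paper's Proposition 5.3: for the nearest-neighbour OQRW on ℤ,
`M(ρ)_i = B ρ_{i+1} Bᴴ + C ρ_{i-1} Cᴴ`, if `BᴴxB = 0` and `CᴴxC = 0` force `x = 0`
for positive semidefinite `x`, then `M(ρ)` is faithful whenever `ρ` is faithful. -/
theorem prop5_3 {d : ℕ} (hd : 1 ≤ d)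
    (B C : Matrix (Fin d) (Fin d) ℂ)
    (hBC : Bᴴ * B + Cᴴ * C = 1)
    (hcond : ∀ x : Matrix (Fin d) (Fin d) ℂ,
      x.PosSemidef → Bᴴ * x * B = 0 → Cᴴ * x * C = 0 → x = 0)
    (M : (ℤ → Matrix (Fin d) (Fin d) ℂ) → ℤ → Matrix (Fin d) (Fin d) ℂ)
    (hM : ∀ ρ i, M ρ i = B * ρ (i + 1) * Bᴴ + C * ρ (i - 1) * Cᴴ) :
    ∀ ρ : ℤ → Matrix (Fin d) (Fin d) ℂ,
      (∀ i, (ρ i).PosSemidef) → (∀ i, (ρ i).PosDef) → ∀ i, (M ρ i).PosDef := by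
  intro ρ hpsd hpd i
  rw [hM]
  have hs1 := (hpsd (i + 1)).mul_mul_conjTranspose_same B
  have hs2 := (hpsd (i - 1)).mul_mul_conjTranspose_same C
  refine posDef_iff_dotProduct_mulVec.mpr ⟨(hs1.add hs2).1, ?_⟩
  intro v hv
  have hsplit : star v ⬝ᵥ (B * ρ (i + 1) * Bᴴ + C * ρ (i - 1) * Cᴴ) *ᵥ v
      = star v ⬝ᵥ (B * ρ (i + 1) * Bᴴ) *ᵥ v + star v ⬝ᵥ (C * ρ (i - 1) * Cᴴ) *ᵥ v := by
    rw [add_mulVec, dotProduct_add]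
  rw [hsplit]
  by_cases hb : Bᴴ *ᵥ v = 0
  · by_cases hc : Cᴴ *ᵥ v = 0
    · exfalso
      apply hv
      have hx := hcond (vecMulVec v (star v)) (vecMulVec_star_posSemidef v)
        (sandwich_zero v B hb) (sandwich_zero v C hc)
      funext j
      have := congrFun (congrFun hx j) j
      simp only [vecMulVec_apply, Pi.star_apply, Matrix.zero_apply] at this
      rcases mul_eq_zero.mp this with h | h
      · exact h
      · simpa using congrArg star h
    · have h1 : 0 ≤ star v ⬝ᵥ (B * ρ (i + 1) * Bᴴ) *ᵥ v := hs1.dotProduct_mulVec_nonneg v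
      have h2 : 0 < star v ⬝ᵥ (C * ρ (i - 1) * Cᴴ) *ᵥ v := by
        rw [quad_form_eq]
        exact (hpd (i - 1)).dotProduct_mulVec_pos hc
      exact add_pos_of_nonneg_of_pos h1 h2
  · have h1 : 0 < star v ⬝ᵥ (B * ρ (i + 1) * Bᴴ) *ᵥ v := by
      rw [quad_form_eq]
      exact (hpd (i + 1)).dotProduct_mulVec_pos hb
    have h2 : 0 ≤ star v ⬝ᵥ (C * ρ (i - 1) * Cᴴ) *ᵥ v := hs2.dotProduct_mulVec_nonneg v
    exact add_pos_of_pos_of_nonneg h1 h2
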